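/- Let V(k) = k² − 2·log k for k > 0. If 0 < a < 1 < b and V(a) = V(b), then 1 − a² < b² − 1 (equivalently a² + b² > 2). In particular, if 0 < a < 1 < b and exp((a²−1)/2)/a = exp((b²−1)/2)/b, then 1 − a² < b² − 1. -/

import Mathlib

open Real

noncomputable def V (k : ℝ) : ℝ := k ^ 2 - 2 * Real.log k

noncomputable def K (R : ℝ) : ℝ := Real.exp ((R ^ 2 - 1) / 2) / R

lemma V_hasDeriv {x : ℝ} (hx : 0 < x) : HasDerivAt V (2 * x - 2 / x) x := by
  have h1 : HasDerivAt (fun k : ℝ => k ^ 2) (2 * x) x := by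
    simpa using (hasDerivAt_pow 2 x)
  have h2 : HasDerivAt (fun k : ℝ => 2 * Real.log k) (2 * x⁻¹) x :=
    (Real.hasDerivAt_log hx.ne').const_mul 2
  have := h1.sub h2
  have hV : V = fun k => k ^ 2 - 2 * Real.log k := rfl
  rw [hV, div_eq_mul_inv]; exact this

lemma V_strictAntiOn : StrictAntiOn V (Set.Ioc 0 1) := by
  apply strictAntiOn_of_deriv_neg (convex_Ioc 0 1)
  · apply ContinuousOn.sub (by fun_prop)
    exact ContinuousOn.mul continuousOn_const
      (Real.continuousOn_log.mono (by intro x hx; exact hx.1.ne'))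
  · intro x hx
    rw [interior_Ioc] at hx
    obtain ⟨hx0, hx1⟩ := hx
    rw [(V_hasDeriv hx0).deriv]
    have : 2 / x > 2 := by
      rw [gt_iff_lt, lt_div_iff₀ hx0]; nlinarith
    linarith

lemma F_key {t : ℝ} (ht1 : 1 < t) (ht2 : t < 2) :
    2 * t - 2 < Real.log t - Real.log (2 - t) := by
  set f : ℝ → ℝ := fun t => Real.log t - Real.log (2 - t) - 2 * t with hf
  have hmono : StrictMonoOn f (Set.Ico 1 2) := by
    apply strictMonoOn_of_deriv_pos (convex_Ico 1 2)
    · apply ContinuousOn.sub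
      apply ContinuousOn.sub
      · exact Real.continuousOn_log.mono (by intro x hx; simp at hx ⊢; linarith [hx.1])
      · apply Real.continuousOn_log.comp (by fun_prop)
        intro x hx
        simp only [Set.mem_Ico] at hx
        simp only [Set.mem_compl_iff, Set.mem_singleton_iff]
        intro h; linarith [hx.2]
      · fun_prop
    · intro x hx
      rw [interior_Ico] at hx
      obtain ⟨hx1, hx2⟩ := hx
      have hx0 : 0 < x := by linarith
      have h2x : 0 < 2 - x := by linarith
      have hd1 : HasDerivAt (fun t : ℝ => Real.log (2 - t)) (-(2 - x)⁻¹) x := by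
        have : HasDerivAt (fun t : ℝ => 2 - t) (-1) x := by
          have h := (hasDerivAt_const x (2:ℝ)).sub (hasDerivAt_id x)
          rw [zero_sub] at h; exact h
        have := (Real.hasDerivAt_log h2x.ne').comp x this
        rw [mul_neg_one] at this; exact this
      have hd : HasDerivAt f (x⁻¹ - (-(2 - x)⁻¹) - 2) x := by
        exact ((Real.hasDerivAt_log hx0.ne').sub hd1).sub
          (by simpa using (hasDerivAt_id x).const_mul 2)
      rw [hd.deriv]
      have hprod : x * (2 - x) < 1 := by nlinarith
      have hu : x * x⁻¹ = 1 := mul_inv_cancel₀ hx0.ne'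
      have hv : (2 - x) * (2 - x)⁻¹ = 1 := mul_inv_cancel₀ h2x.ne'
      have hup : 0 < x⁻¹ := inv_pos.mpr hx0
      have hvp : 0 < (2 - x)⁻¹ := inv_pos.mpr h2x
      have huv : 1 < x⁻¹ * (2 - x)⁻¹ := by nlinarith
      nlinarith [sq_nonneg (x⁻¹ - (2 - x)⁻¹)]
  have := hmono (by simp) (by constructor <;> linarith) ht1
  simp only [hf, Real.log_one, sub_self] at this
  -- this : 0 - log (2-1) - 2*1 < log t - log (2-t) - 2*t
  norm_num at this
  linarith

lemma main_V : ∀ a b : ℝ, 0 < a → a < 1 → 1 < b → V a = V b → 1 - a ^ 2 < b ^ 2 - 1 := by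
  intro a b ha ha1 hb hV
  by_cases hb2 : 2 ≤ b ^ 2
  · nlinarith
  push_neg at hb2
  have hb0 : 0 < b := by linarith
  have h2b : 0 < 2 - b ^ 2 := by linarith
  have hb21 : 1 < b ^ 2 := by nlinarith
  set c := Real.sqrt (2 - b ^ 2) with hc
  have hc0 : 0 < c := Real.sqrt_pos.mpr h2b
  have hc2 : c ^ 2 = 2 - b ^ 2 := Real.sq_sqrt h2b.le
  have hc1 : c ≤ 1 := by nlinarith [Real.sq_sqrt h2b.le, Real.sqrt_nonneg (2 - b^2)]
  -- V c > V b
  have hlog : Real.log (c ^ 2) = 2 * Real.log c := by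
    rw [sq, Real.log_mul hc0.ne' hc0.ne']; ring
  have hkey := F_key hb21 hb2
  have hVcb : V b < V c := by
    have hlogb : Real.log (b ^ 2) = 2 * Real.log b := by
      rw [sq, Real.log_mul hb0.ne' hb0.ne']; ring
    have : Real.log (2 - b ^ 2) < 2 * Real.log b - (2 * b ^ 2 - 2) := by
      rw [← hlogb]; linarith
    simp only [V]
    rw [hc2, ← hlog, hc2]
    linarith
  -- conclude c < a
  have hca : c < a := by
    by_contra h
    push_neg at h
    rcases eq_or_lt_of_le h with heq | hlt
    · have h' := hV; rw [heq] at h'; linarith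
    · have := V_strictAntiOn ⟨ha, ha1.le⟩ ⟨hc0, hc1⟩ hlt
      rw [hV] at this; linarith
  nlinarith

theorem stmt_0 :
    (∀ a b : ℝ, 0 < a → a < 1 → 1 < b → V a = V b → 1 - a ^ 2 < b ^ 2 - 1) ∧
    (∀ a b : ℝ, 0 < a → a < 1 → 1 < b → K a = K b → 1 - a ^ 2 < b ^ 2 - 1) := by
  constructor
  · exact main_V
  · intro a b ha ha1 hb hK
    apply main_V a b ha ha1 hb
    have hb0 : 0 < b := by linarith
    have hlog := congrArg Real.log hK
    simp only [K, Real.log_div (Real.exp_ne_zero _) ha.ne',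
      Real.log_div (Real.exp_ne_zero _) hb0.ne', Real.log_exp] at hlog
    simp only [V]
    linarith
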